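/- Let F be a d-cluster tilting subcategory of a triangulated category T, i.e. F is functorially finite, closed under direct summands, and F = {X ∈ T : Hom(X, F[i]) = 0 for 0 < i < d} = {X ∈ T : Hom(F, X[i]) = 0 for 0 < i < d}. Then F is idempotent complete if and only if T is idempotent complete. -/

import Mathlib

open CategoryTheory CategoryTheory.Limits CategoryTheory.Pretriangulated
  CategoryTheory.Category CategoryTheory.Preadditive

universe v u

variable {T : Type u} [Category.{v} T] [HasZeroObject T] [HasShift T ℤ] [Preadditive T]
    [∀ n : ℤ, (shiftFunctor T n).Additive] [Pretriangulated T]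

def SplitIdem17 {X : T} (e : X ⟶ X) : Prop :=
  ∃ (Y : T) (r : X ⟶ Y) (ι : Y ⟶ X), e = r ≫ ι ∧ ι ≫ r = 𝟙 Y

/-- Lift a pair of compatible idempotents on `obj₂`, `obj₃` of a distinguished triangle
to an honest idempotent on `obj₁` (Balmer–Schlichting correction trick). -/
lemma lift_idem17 (Δ : Triangle T) (hΔ : Δ ∈ distTriang T)
    (p : Δ.obj₂ ⟶ Δ.obj₂) (ε : Δ.obj₃ ⟶ Δ.obj₃) (hp : p ≫ p = p) (hε : ε ≫ ε = ε)
    (comm : Δ.mor₂ ≫ ε = p ≫ Δ.mor₂) :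
    ∃ α : Δ.obj₁ ⟶ Δ.obj₁, α ≫ α = α ∧ α ≫ Δ.mor₁ = Δ.mor₁ ≫ p ∧
      Δ.mor₃ ≫ α⟦(1 : ℤ)⟧' = ε ≫ Δ.mor₃ := by
  obtain ⟨a, ha₁, ha₂⟩ := complete_distinguished_triangle_morphism₁ Δ Δ hΔ hΔ p ε comm
  -- ha₁ : Δ.mor₁ ≫ p = a ≫ Δ.mor₁ ; ha₂ : Δ.mor₃ ≫ a⟦1⟧' = ε ≫ Δ.mor₃
  obtain ⟨δ, hδdef⟩ : ∃ δ' : Δ.obj₁ ⟶ Δ.obj₁, δ' = a ≫ a - a := ⟨_, rfl⟩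
  have hδ₁ : δ ≫ Δ.mor₁ = 0 := by
    have h1 : (a ≫ a) ≫ Δ.mor₁ = a ≫ Δ.mor₁ := by
      rw [assoc, ← ha₁, ← assoc, ← ha₁, assoc, hp]
    rw [hδdef, sub_comp, h1, sub_self]
  have hδ₃ : Δ.mor₃ ≫ δ⟦(1 : ℤ)⟧' = 0 := by
    have h1 : Δ.mor₃ ≫ (a ≫ a)⟦(1 : ℤ)⟧' = Δ.mor₃ ≫ a⟦(1 : ℤ)⟧' := by
      rw [Functor.map_comp, ← assoc, ha₂, assoc, ha₂, ← assoc, hε]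
    rw [hδdef, Functor.map_sub, comp_sub, h1, sub_self]
  -- factor δ through the inverse-rotated mor₁
  obtain ⟨z, hz⟩ := Triangle.coyoneda_exact₂ Δ.invRotate (inv_rot_of_distTriang Δ hΔ) δ hδ₁
  have hu : Δ.invRotate.mor₁ ≫ δ = 0 := by
    have hnat := (shiftFunctorCompIsoId T (1 : ℤ) (-1 : ℤ)
      (by omega)).hom.naturality δ
    dsimp at hnat
    dsimp [Triangle.invRotate]
    erw [neg_comp, assoc, ← hnat]
    erw [← Functor.map_comp_assoc, hδ₃, Functor.map_zero, zero_comp, neg_zero]; rfl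
  have hδδ : δ ≫ δ = 0 := by
    calc δ ≫ δ = z ≫ (Δ.invRotate.mor₁ ≫ δ) := by erw [← assoc, ← hz]; rfl
      _ = 0 := by rw [hu, comp_zero]
  have hδa : δ ≫ a = a ≫ δ := by
    rw [hδdef]; simp only [sub_comp, comp_sub, assoc]
  have haa : a ≫ a = a + δ := by rw [hδdef]; abel
  have haaδ : a ≫ a ≫ δ = a ≫ δ := by
    rw [← assoc, haa, add_comp, hδδ, add_zero]
  refine ⟨a + δ - a ≫ δ - a ≫ δ, ?_, ?_, ?_⟩
  · -- idempotency
    have e1 : (a + δ - a ≫ δ - a ≫ δ) ≫ a = a + δ - a ≫ δ := by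
      simp only [sub_comp, add_comp, assoc, hδa, haaδ, haa]
      abel
    have e2 : (a + δ - a ≫ δ - a ≫ δ) ≫ δ = a ≫ δ := by
      simp only [sub_comp, add_comp, assoc, hδδ, comp_zero, sub_zero, add_zero]
    calc (a + δ - a ≫ δ - a ≫ δ) ≫ (a + δ - a ≫ δ - a ≫ δ)
        = (a + δ - a ≫ δ - a ≫ δ) ≫ a + (a + δ - a ≫ δ - a ≫ δ) ≫ δ
          - ((a + δ - a ≫ δ - a ≫ δ) ≫ a) ≫ δ - ((a + δ - a ≫ δ - a ≫ δ) ≫ a) ≫ δ := by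
          simp only [comp_sub, comp_add, assoc]
      _ = (a + δ - a ≫ δ) + a ≫ δ - (a ≫ δ) - (a ≫ δ) := by
          rw [e1, e2]
          have e3 : (a + δ - a ≫ δ) ≫ δ = a ≫ δ := by
            simp only [sub_comp, add_comp, assoc, hδδ, comp_zero, sub_zero, add_zero]
          rw [e3]
      _ = a + δ - a ≫ δ - a ≫ δ := by abel
  · -- first square
    have e4 : (a ≫ δ) ≫ Δ.mor₁ = 0 := by rw [assoc, hδ₁, comp_zero]
    rw [sub_comp, sub_comp, add_comp, hδ₁, e4, add_zero, sub_zero, sub_zero, ← ha₁]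
  · -- third square
    have e5 : Δ.mor₃ ≫ (a ≫ δ)⟦(1 : ℤ)⟧' = 0 := by
      rw [Functor.map_comp, ← assoc, ha₂, assoc, hδ₃, comp_zero]
    rw [Functor.map_sub, Functor.map_sub, Functor.map_add, comp_sub, comp_sub, comp_add,
      hδ₃, e5, add_zero, sub_zero, sub_zero, ha₂]

lemma descend_split17 (Δ : Triangle T) (hΔ : Δ ∈ distTriang T)
    (α : Δ.obj₁ ⟶ Δ.obj₁) (p : Δ.obj₂ ⟶ Δ.obj₂) (ε : Δ.obj₃ ⟶ Δ.obj₃)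
    (hε : ε ≫ ε = ε)
    (hsq1 : α ≫ Δ.mor₁ = Δ.mor₁ ≫ p) (hsq2 : Δ.mor₂ ≫ ε = p ≫ Δ.mor₂)
    (hsq3 : Δ.mor₃ ≫ α⟦(1 : ℤ)⟧' = ε ≫ Δ.mor₃)
    (sα : SplitIdem17 α) (sp : SplitIdem17 p) : SplitIdem17 ε := by
  obtain ⟨Y₁, rα, ια, hα₁, hα₂⟩ := sα
  obtain ⟨P, rp, ιp, hp₁, hp₂⟩ := sp
  have hιαα : ια ≫ α = ια := by rw [hα₁, ← assoc, hα₂, id_comp]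
  have hprp : p ≫ rp = rp := by rw [hp₁, assoc, hp₂, comp_id]
  obtain ⟨Q, q, s, hΔY⟩ := distinguished_cocone_triangle (ια ≫ Δ.mor₁ ≫ rp)
  -- morphism (ια, ιp, aQ) : ΔY ⟶ Δ
  obtain ⟨aQ, haQ₁, haQ₂⟩ := complete_distinguished_triangle_morphism
    (Triangle.mk (ια ≫ Δ.mor₁ ≫ rp) q s) Δ hΔY hΔ ια ιp (by
      change (ια ≫ Δ.mor₁ ≫ rp) ≫ ιp = ια ≫ Δ.mor₁
      rw [assoc, assoc, ← hp₁, ← hsq1, ← assoc, hιαα])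
  change Q ⟶ Δ.obj₃ at aQ
  change q ≫ aQ = ιp ≫ Δ.mor₂ at haQ₁
  change s ≫ ια⟦(1 : ℤ)⟧' = aQ ≫ Δ.mor₃ at haQ₂
  -- haQ₁ : q ≫ aQ = ιp ≫ Δ.mor₂ ; haQ₂ : s ≫ ια⟦1⟧' = aQ ≫ Δ.mor₃
  -- morphism (rα, rp, b) : Δ ⟶ ΔY
  obtain ⟨b, hb₁, hb₂⟩ := complete_distinguished_triangle_morphism
    Δ (Triangle.mk (ια ≫ Δ.mor₁ ≫ rp) q s) hΔ hΔY rα rp (by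
      change Δ.mor₁ ≫ rp = rα ≫ (ια ≫ Δ.mor₁ ≫ rp)
      rw [← assoc, ← hα₁, ← assoc, hsq1, assoc, hprp])
  change Δ.obj₃ ⟶ Q at b
  change Δ.mor₂ ≫ b = rp ≫ q at hb₁
  change Δ.mor₃ ≫ rα⟦(1 : ℤ)⟧' = b ≫ s at hb₂
  -- hb₁ : Δ.mor₂ ≫ b = rp ≫ q ; hb₂ : Δ.mor₃ ≫ rα⟦1⟧' = b ≫ s
  obtain ⟨η, hηdef⟩ : ∃ η' : Q ⟶ Q, η' = aQ ≫ b - 𝟙 Q := ⟨_, rfl⟩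
  have hab : aQ ≫ b = 𝟙 Q + η := by rw [hηdef]; abel
  have hqη : q ≫ η = 0 := by
    rw [hηdef, comp_sub, ← assoc, haQ₁, assoc, hb₁, ← assoc, hp₂, id_comp, comp_id, sub_self]
  have hηs : η ≫ s = 0 := by
    rw [hηdef, sub_comp, assoc, ← hb₂, ← assoc, ← haQ₂, assoc, ← Functor.map_comp, hα₂,
      CategoryTheory.Functor.map_id, comp_id, id_comp, sub_self]
  obtain ⟨zη, hzη⟩ := Triangle.coyoneda_exact₃ (Triangle.mk (ια ≫ Δ.mor₁ ≫ rp) q s) hΔY η hηs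
  change Q ⟶ P at zη
  change η = zη ≫ q at hzη
  have hηη : η ≫ η = 0 := by
    calc η ≫ η = zη ≫ (q ≫ η) := by rw [← assoc, ← hzη]
      _ = 0 := by rw [hqη, comp_zero]
  obtain ⟨btil, hbtildef⟩ : ∃ b' : Δ.obj₃ ⟶ Q, b' = b ≫ (𝟙 Q - η) := ⟨_, rfl⟩
  have habtil : aQ ≫ btil = 𝟙 Q := by
    rw [hbtildef, ← assoc, hab]
    simp only [add_comp, comp_sub, sub_comp, id_comp, comp_id, hηη]
    abel
  obtain ⟨ρ, hρdef⟩ : ∃ ρ' : Δ.obj₃ ⟶ Δ.obj₃, ρ' = btil ≫ aQ - ε := ⟨_, rfl⟩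
  have heρ : btil ≫ aQ = ε + ρ := by rw [hρdef]; abel
  -- mor₂ ≫ ρ = 0
  have hqbtil : Δ.mor₂ ≫ btil = rp ≫ q := by
    rw [hbtildef, ← assoc, hb₁, comp_sub, comp_id, assoc, hqη, comp_zero, sub_zero]
  have hmorρ : Δ.mor₂ ≫ ρ = 0 := by
    rw [hρdef, comp_sub, ← assoc, hqbtil, assoc, haQ₁, ← assoc, ← hp₁, hsq2, sub_self]
  -- ρ ≫ mor₃ = 0
  have hbtilw : btil ≫ aQ ≫ Δ.mor₃ = Δ.mor₃ ≫ α⟦(1 : ℤ)⟧' := by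
    have e1 : η ≫ s ≫ (shiftFunctor T 1).map ια = 0 := by rw [← assoc, hηs, zero_comp]
    rw [← haQ₂, hbtildef, assoc, sub_comp, id_comp, e1, sub_zero, ← assoc, ← hb₂, assoc,
      ← Functor.map_comp, ← hα₁]
  have hρw : ρ ≫ Δ.mor₃ = 0 := by
    rw [hρdef, sub_comp, assoc, hbtilw, hsq3, sub_self]
  obtain ⟨zρ, hzρ⟩ := Triangle.coyoneda_exact₃ Δ hΔ ρ hρw
  have hρρ : ρ ≫ ρ = 0 := by
    calc ρ ≫ ρ = zρ ≫ (Δ.mor₂ ≫ ρ) := by rw [← assoc, ← hzρ]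
      _ = 0 := by rw [hmorρ, comp_zero]
  -- the idempotent e' = btil ≫ aQ and its relation to ε
  have he' : (btil ≫ aQ) ≫ (btil ≫ aQ) = btil ≫ aQ := by
    rw [assoc, ← assoc aQ, habtil, id_comp]
  have hsum : ε ≫ ρ + ρ ≫ ε = ρ := by
    have h1 : ε ≫ ε + ε ≫ ρ + ρ ≫ ε + ρ ≫ ρ = ε + ρ := by
      have h0 := he'
      rw [heρ] at h0
      calc ε ≫ ε + ε ≫ ρ + ρ ≫ ε + ρ ≫ ρ = (ε + ρ) ≫ (ε + ρ) := by
            simp only [add_comp, comp_add]; abel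
        _ = ε + ρ := h0
    rw [hε, hρρ, add_zero] at h1
    have h2 : ε + (ε ≫ ρ + ρ ≫ ε) = ε + ρ := by rw [← h1]; abel
    exact add_left_cancel h2
  have m3 : ε ≫ ρ ≫ ε = 0 := by
    have := congrArg (fun x => ε ≫ x) hsum
    simp only [comp_add, ← assoc, hε] at this
    -- this : ε ≫ ρ + (ε ≫ ρ) ≫ ε = ε ≫ ρ
    have h2 : (ε ≫ ρ) ≫ ε = 0 := by
      calc (ε ≫ ρ) ≫ ε = (ε ≫ ρ + (ε ≫ ρ) ≫ ε) - ε ≫ ρ := by abel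
        _ = 0 := by rw [this]; abel
    rw [← assoc]; exact h2
  have m2 : ρ ≫ ε ≫ ρ = 0 := by
    have h := congrArg (fun x => ρ ≫ x) hsum
    simp only [comp_add, ← assoc, hρρ, zero_comp, add_zero] at h
    simpa only [assoc] using h
  have m5 : ρ ≫ ρ ≫ ε = 0 := by rw [← assoc, hρρ, zero_comp]
  have m4 : ρ ≫ ε ≫ ρ ≫ ε = 0 := by
    rw [show ρ ≫ ε ≫ ρ ≫ ε = (ρ ≫ ε ≫ ρ) ≫ ε by simp only [assoc], m2, zero_comp]
  obtain ⟨ν, hνdef⟩ : ∃ ν' : Δ.obj₃ ⟶ Δ.obj₃, ν' = ρ ≫ ε + ρ ≫ ε - ρ := ⟨_, rfl⟩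
  have hνν : ν ≫ ν = 0 := by
    rw [hνdef]
    simp only [add_comp, comp_add, sub_comp, comp_sub, assoc, hρρ, m2, m4, m5,
      comp_zero, zero_comp, sub_zero, add_zero, zero_add]
  have m6 : ρ ≫ ε ≫ ε = ρ ≫ ε := by rw [hε]
  have hεν : ε ≫ ν = -(ε ≫ ρ) := by
    rw [hνdef, comp_sub, comp_add, m3, add_zero, zero_sub]
  have hρν : ρ ≫ ν = 0 := by
    rw [hνdef, comp_sub, comp_add, m5, add_zero, hρρ, sub_zero]
  have hνε : ν ≫ ε = ρ ≫ ε := by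
    rw [hνdef, sub_comp, add_comp, assoc, m6]
    abel
  have key : (btil ≫ aQ) ≫ (𝟙 Δ.obj₃ + ν) = (𝟙 Δ.obj₃ + ν) ≫ ε := by
    have R : (𝟙 Δ.obj₃ + ν) ≫ ε = ε + ρ ≫ ε := by
      rw [add_comp, id_comp, hνε]
    have L : (ε + ρ) ≫ (𝟙 Δ.obj₃ + ν) = ε + ρ ≫ ε := by
      simp only [comp_add, add_comp, comp_id, hεν, hρν, add_zero]
      have h9 : ρ ≫ ε = ρ - ε ≫ ρ := by rw [eq_sub_iff_add_eq, add_comm]; exact hsum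
      rw [h9]; abel
    rw [heρ, L, R]
  refine ⟨Q, (𝟙 Δ.obj₃ - ν) ≫ btil, aQ ≫ (𝟙 Δ.obj₃ + ν), ?_, ?_⟩
  · -- ε = r ≫ ι
    have h1 : ((𝟙 Δ.obj₃ - ν) ≫ btil) ≫ (aQ ≫ (𝟙 Δ.obj₃ + ν))
        = (𝟙 Δ.obj₃ - ν) ≫ ((btil ≫ aQ) ≫ (𝟙 Δ.obj₃ + ν)) := by
      simp only [assoc]
    rw [h1, key, ← assoc]
    have h2 : (𝟙 Δ.obj₃ - ν) ≫ (𝟙 Δ.obj₃ + ν) = 𝟙 Δ.obj₃ := by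
      simp only [sub_comp, comp_add, comp_id, id_comp, hνν]
      abel
    rw [h2, id_comp]
  · -- ι ≫ r = 𝟙 Q
    have h3 : (aQ ≫ (𝟙 Δ.obj₃ + ν)) ≫ ((𝟙 Δ.obj₃ - ν) ≫ btil)
        = aQ ≫ ((𝟙 Δ.obj₃ + ν) ≫ (𝟙 Δ.obj₃ - ν)) ≫ btil := by
      simp only [assoc]
    have h4 : (𝟙 Δ.obj₃ + ν) ≫ (𝟙 Δ.obj₃ - ν) = 𝟙 Δ.obj₃ := by
      simp only [add_comp, comp_sub, comp_id, id_comp, hνν]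
      abel
    rw [h3, h4, id_comp, habtil]


section Main

variable {T : Type u} [Category.{v} T] [HasZeroObject T] [HasShift T ℤ] [Preadditive T]
    [∀ n : ℤ, (shiftFunctor T n).Additive] [Pretriangulated T]

end Main

/-- a `d`-cluster tilting subcategory `ℱ` of a triangulated category `T`
is idempotent complete if and only if `T` is idempotent complete. -/
theorem dCT_idempotentComplete_iff
    (T : Type u) [Category.{v} T] [HasZeroObject T] [HasShift T ℤ] [Preadditive T]
    [∀ n : ℤ, (shiftFunctor T n).Additive] [Pretriangulated T]
    (d : ℕ) (hd : 1 ≤ d) (ℱ : Set T)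
    -- `ℱ` is functorially finite:
    (hcontra : ∀ X : T, ∃ M ∈ ℱ, ∃ f : M ⟶ X,
      ∀ M' ∈ ℱ, ∀ g : M' ⟶ X, ∃ h : M' ⟶ M, h ≫ f = g)
    (hcov : ∀ X : T, ∃ M ∈ ℱ, ∃ f : X ⟶ M,
      ∀ M' ∈ ℱ, ∀ g : X ⟶ M', ∃ h : M ⟶ M', f ≫ h = g)
    -- `ℱ` is closed under direct summands (retracts):
    (hsummand : ∀ (X Y : T) (r : X ⟶ Y) (ι : Y ⟶ X), ι ≫ r = 𝟙 Y → X ∈ ℱ → Y ∈ ℱ)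
    -- Hom-vanishing characterizations:
    (heq1 : ℱ = {X : T | ∀ i : ℤ, 0 < i → i < (d : ℤ) → ∀ M ∈ ℱ,
      ∀ f : X ⟶ (shiftFunctor T i).obj M, f = 0})
    (heq2 : ℱ = {X : T | ∀ i : ℤ, 0 < i → i < (d : ℤ) → ∀ M ∈ ℱ,
      ∀ f : M ⟶ (shiftFunctor T i).obj X, f = 0}) :
    (∀ X : T, X ∈ ℱ → ∀ e : X ⟶ X, e ≫ e = e →
      ∃ Y : T, Y ∈ ℱ ∧ ∃ (r : X ⟶ Y) (ι : Y ⟶ X), e = r ≫ ι ∧ ι ≫ r = 𝟙 Y) ↔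
    IsIdempotentComplete T := by
  constructor
  · -- hard direction
    intro hsplit
    have main : ∀ j : ℕ, ∀ Z : T, ∀ ε : Z ⟶ Z, ε ≫ ε = ε →
        (∀ i : ℤ, 0 < i → i + (j : ℤ) < (d : ℤ) → ∀ M ∈ ℱ,
          ∀ f : M ⟶ (shiftFunctor T i).obj Z, f = 0) →
        SplitIdem17 ε := by
      intro j
      induction j with
      | zero =>
        intro Z ε hε hvan
        have hZF : Z ∈ ℱ := by
          rw [heq2]
          intro i hi1 hi2 M hM f
          exact hvan i hi1 (by push_cast; omega) M hM f
        obtain ⟨Y, _, r, ι, h1, h2⟩ := hsplit Z hZF ε hε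
        exact ⟨Y, r, ι, h1, h2⟩
      | succ j ih =>
        intro Z ε hε hvan
        obtain ⟨M₀, hM₀, f, hf⟩ := hcontra Z
        -- the approximation with built-in idempotent
        obtain ⟨A, v, w, hΔ⟩ :=
          distinguished_cocone_triangle₁ (biprod.desc (f ≫ ε) (f ≫ (𝟙 Z - ε)))
        have hp : (biprod.fst ≫ biprod.inl : M₀ ⊞ M₀ ⟶ M₀ ⊞ M₀) ≫
            (biprod.fst ≫ biprod.inl : M₀ ⊞ M₀ ⟶ M₀ ⊞ M₀) =
            (biprod.fst ≫ biprod.inl : M₀ ⊞ M₀ ⟶ M₀ ⊞ M₀) := by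
          rw [assoc, ← assoc biprod.inl, biprod.inl_fst, id_comp]
        have hcomm : biprod.desc (f ≫ ε) (f ≫ (𝟙 Z - ε)) ≫ ε =
            (biprod.fst ≫ biprod.inl) ≫ biprod.desc (f ≫ ε) (f ≫ (𝟙 Z - ε)) := by
          apply biprod.hom_ext'
          · rw [← assoc, biprod.inl_desc, ← assoc, ← assoc, biprod.inl_fst, id_comp,
              biprod.inl_desc, assoc, hε]
          · rw [← assoc, biprod.inr_desc, ← assoc, ← assoc, biprod.inr_fst, zero_comp,
              zero_comp, assoc, sub_comp, id_comp, hε, sub_self, comp_zero]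
        have happrox : ∀ M, M ∈ ℱ → ∀ g : M ⟶ Z,
            ∃ m : M ⟶ M₀ ⊞ M₀, m ≫ biprod.desc (f ≫ ε) (f ≫ (𝟙 Z - ε)) = g := by
          intro M hM g
          obtain ⟨m, hm⟩ := hf M hM g
          refine ⟨m ≫ biprod.lift (𝟙 M₀) (𝟙 M₀), ?_⟩
          have hsum1 : f ≫ ε + f ≫ (𝟙 Z - ε) = f := by
            rw [comp_sub, comp_id]; abel
          rw [assoc, biprod.lift_desc, id_comp, id_comp, hsum1, hm]
        obtain ⟨α, hαidem, hα₁, hα₃⟩ :=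
          lift_idem17 (Triangle.mk v (biprod.desc (f ≫ ε) (f ≫ (𝟙 Z - ε))) w) hΔ
            (biprod.fst ≫ biprod.inl) ε hp hε hcomm
        -- all maps from ℱ to shifts of the biproduct vanish
        have hNvan : ∀ i : ℤ, 0 < i → i < (d : ℤ) → ∀ M, M ∈ ℱ →
            ∀ ψ : M ⟶ (shiftFunctor T i).obj (M₀ ⊞ M₀), ψ = 0 := by
          intro i hi1 hi2 M hM ψ
          have h0 : M₀ ∈ {X : T | ∀ i : ℤ, 0 < i → i < (d : ℤ) → ∀ M ∈ ℱ,
              ∀ f : M ⟶ (shiftFunctor T i).obj X, f = 0} := heq2 ▸ hM₀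
          have hM₀v : ∀ φ : M ⟶ (shiftFunctor T i).obj M₀, φ = 0 :=
            fun φ => h0 i hi1 hi2 M hM φ
          have htot : (𝟙 (M₀ ⊞ M₀) : M₀ ⊞ M₀ ⟶ M₀ ⊞ M₀) =
              biprod.fst ≫ biprod.inl + biprod.snd ≫ biprod.inr := biprod.total.symm
          calc ψ = ψ ≫ (shiftFunctor T i).map (𝟙 (M₀ ⊞ M₀)) := by
                rw [CategoryTheory.Functor.map_id, comp_id]
            _ = (ψ ≫ (shiftFunctor T i).map biprod.fst) ≫ (shiftFunctor T i).map biprod.inl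
                + (ψ ≫ (shiftFunctor T i).map biprod.snd) ≫
                    (shiftFunctor T i).map biprod.inr := by
                rw [htot, Functor.map_add, Functor.map_comp, Functor.map_comp]
                simp only [comp_add, assoc]
            _ = 0 := by
                rw [hM₀v (ψ ≫ (shiftFunctor T i).map biprod.fst),
                  hM₀v (ψ ≫ (shiftFunctor T i).map biprod.snd), zero_comp, zero_comp, add_zero]
        -- vanishing transfer to `A`
        have hAvan : ∀ i : ℤ, 0 < i → i + (j : ℤ) < (d : ℤ) → ∀ M ∈ ℱ,
            ∀ f' : M ⟶ (shiftFunctor T i).obj A, f' = 0 := by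
          intro i hi1 hi2 M hM f'
          by_cases hi : i = 1
          · subst hi
            have hcomp : f' ≫ (Triangle.mk v (biprod.desc (f ≫ ε) (f ≫ (𝟙 Z - ε))) w).rotate.mor₃
                = 0 := by
              have hz : f' ≫ (shiftFunctor T (1 : ℤ)).map v = 0 :=
                hNvan 1 one_pos (by push_cast at hi2 ⊢; omega) M hM _
              dsimp [Triangle.rotate]
              erw [comp_neg, hz, neg_zero]; rfl
            obtain ⟨g, hg⟩ := Triangle.coyoneda_exact₃ _
              (rot_of_distTriang _ hΔ) f' hcomp
            obtain ⟨m, hm⟩ := happrox M hM g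
            have hzero23 : biprod.desc (f ≫ ε) (f ≫ (𝟙 Z - ε)) ≫ w = 0 :=
              comp_distTriang_mor_zero₂₃ _ hΔ
            rw [hg]
            dsimp [Triangle.rotate]
            erw [← hm, assoc, hzero23, comp_zero]; rfl
          · have hi2' : (2 : ℤ) ≤ i := by omega
            have hadd : i - 1 + 1 = i := by omega
            set eA := shiftFunctorAdd' T (i - 1) 1 i hadd with heA
            have hΔ' : (Triangle.shiftFunctor T (i - 1)).obj
                (Triangle.mk v (biprod.desc (f ≫ ε) (f ≫ (𝟙 Z - ε))) w) ∈ distTriang T :=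
              Triangle.shift_distinguished _ hΔ (i - 1)
            have hzero : ∀ ψ : M ⟶ (shiftFunctor T (1 : ℤ)).obj
                ((shiftFunctor T (i - 1)).obj (M₀ ⊞ M₀)), ψ = 0 := by
              intro ψ
              have h1 : ψ ≫ eA.inv.app (M₀ ⊞ M₀) = 0 :=
                hNvan i hi1 (by push_cast at hi2 ⊢; omega) M hM _
              calc ψ = (ψ ≫ eA.inv.app (M₀ ⊞ M₀)) ≫ eA.hom.app (M₀ ⊞ M₀) := by
                    rw [assoc, Iso.inv_hom_id_app]
                    simp only [Functor.comp_obj, comp_id]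
                _ = 0 := by rw [h1, zero_comp]
            have hcomp : (f' ≫ eA.hom.app A) ≫ ((Triangle.shiftFunctor T (i - 1)).obj
                (Triangle.mk v (biprod.desc (f ≫ ε) (f ≫ (𝟙 Z - ε))) w)).rotate.mor₃ = 0 :=
              hzero _
            obtain ⟨g, hg⟩ := Triangle.coyoneda_exact₃ _
              (rot_of_distTriang _ hΔ') (f' ≫ eA.hom.app A) hcomp
            have hg0 : g = 0 := by
              have := hvan (i - 1) (by omega) (by push_cast at hi2 ⊢; omega) M hM g
              exact this
            rw [hg0, zero_comp] at hg
            calc f' = (f' ≫ eA.hom.app A) ≫ eA.inv.app A := by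
                  rw [assoc, Iso.hom_inv_id_app, comp_id]
              _ = 0 := by erw [hg, zero_comp]
        have sα := ih A α hαidem hAvan
        have sp : SplitIdem17 (biprod.fst ≫ biprod.inl : M₀ ⊞ M₀ ⟶ M₀ ⊞ M₀) :=
          ⟨M₀, biprod.fst, biprod.inl, rfl, biprod.inl_fst⟩
        exact descend_split17 (Triangle.mk v (biprod.desc (f ≫ ε) (f ≫ (𝟙 Z - ε))) w) hΔ
          α (biprod.fst ≫ biprod.inl) ε hε hα₁ hcomm hα₃ sα sp
    refine ⟨fun X e he => ?_⟩
    have hvac : ∀ i : ℤ, 0 < i → i + ((d - 1 : ℕ) : ℤ) < (d : ℤ) → ∀ M ∈ ℱ,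
        ∀ f : M ⟶ (shiftFunctor T i).obj X, f = 0 := by
      intro i hi1 hi2 M hM f
      exfalso
      omega
    obtain ⟨Y, r, ι, h1, h2⟩ := main (d - 1) X e he hvac
    exact ⟨Y, ι, r, h2, h1.symm⟩
  · -- easy direction
    intro hic X hX e he
    obtain ⟨Y, i, e', h1, h2⟩ := hic.idempotents_split X e he
    exact ⟨Y, hsummand X Y e' i h1 hX, e', i, h2.symm, h1⟩
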